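/- In the algebra f, for every integer m with 0 ≤ m ≤ N, one has θ_i^{(m)} θ_j = Σ_{p=0}^{m} v^{(p−N)(m−p)} f′(i,j;p) θ_i^{(m−p)}. -/

import Mathlib

noncomputable section

open Finset

/-- The base field `K = ℚ(v)`. -/
abbrev K : Type := RatFunc ℚ

/-- The variable `v`. -/
def v : K := RatFunc.X

/-- The balanced quantum integer `[n]_v = (v^n - v^{-n})/(v - v^{-1})`. -/
def qnum (n : ℕ) : K := (v ^ (n : ℤ) - v ^ (-(n : ℤ))) / (v - v⁻¹)

/-- The quantum factorial `[n]_v!`. -/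
def qfac : ℕ → K
  | 0 => 1
  | n + 1 => qfac n * qnum (n + 1)

/-- Divided power `x^{(n)} = x^n/[n]_v!` in the free algebra. -/
def fdp (x : FreeAlgebra K (Fin 2)) (n : ℕ) : FreeAlgebra K (Fin 2) :=
  (qfac n)⁻¹ • x ^ n

/-- The generator `θ_i` in the free algebra. -/
def θi' : FreeAlgebra K (Fin 2) := FreeAlgebra.ι K 0

/-- The generator `θ_j` in the free algebra. -/
def θj' : FreeAlgebra K (Fin 2) := FreeAlgebra.ι K 1

/-- The two quantum Serre relations defining Lusztig's algebra `f` for the quiver with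
two vertices `i, j` and `N` arrows from `j` to `i` (so `a_{ij} = a_{ji} = -N`). -/
inductive SerreRel (N : ℕ) : FreeAlgebra K (Fin 2) → FreeAlgebra K (Fin 2) → Prop
  | serre_i : SerreRel N
      (∑ k ∈ range (N + 2), ((-1 : K) ^ k) • (fdp θi' k * θj' * fdp θi' (N + 1 - k))) 0
  | serre_j : SerreRel N
      (∑ k ∈ range (N + 2), ((-1 : K) ^ k) • (fdp θj' k * θi' * fdp θj' (N + 1 - k))) 0

/-- Lusztig's algebra `f`. -/
def LusztigF (N : ℕ) : Type := RingQuot (SerreRel N)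

instance (N : ℕ) : Ring (LusztigF N) := inferInstanceAs (Ring (RingQuot (SerreRel N)))
instance (N : ℕ) : Algebra K (LusztigF N) := inferInstanceAs (Algebra K (RingQuot (SerreRel N)))

/-- The generator `θ_i` of `f`. -/
def θi (N : ℕ) : LusztigF N := RingQuot.mkAlgHom K (SerreRel N) θi'

/-- The generator `θ_j` of `f`. -/
def θj (N : ℕ) : LusztigF N := RingQuot.mkAlgHom K (SerreRel N) θj'

/-- Divided power `x^{(n)} = x^n/[n]_v!` in `f`. -/
def dp {N : ℕ} (x : LusztigF N) (n : ℕ) : LusztigF N := (qfac n)⁻¹ • x ^ n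



lemma v_ne_zero : v ≠ 0 := RatFunc.X_ne_zero

lemma vpow_ne_one {n : ℕ} (hn : n ≠ 0) : v ^ n ≠ 1 := by
  intro h
  have : algebraMap (Polynomial ℚ) K (Polynomial.X ^ n) = algebraMap (Polynomial ℚ) K 1 := by
    simpa [map_pow, RatFunc.algebraMap_X, v] using h
  have h2 : (Polynomial.X : Polynomial ℚ) ^ n = 1 := RatFunc.algebraMap_injective ℚ this
  have h3 := congrArg (Polynomial.eval 2) h2
  simp at h3
  have : (1:ℚ) < 2 ^ n := one_lt_pow₀ (by norm_num) hn
  simp_all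

lemma vv_sub_ne_zero : v - v⁻¹ ≠ 0 := by
  intro h
  have hv := v_ne_zero
  have h2 : v * v = 1 := by
    have h3 := sub_eq_zero.mp h
    nth_rewrite 2 [h3]
    exact mul_inv_cancel₀ hv
  exact vpow_ne_one (n := 2) (by norm_num) (by rw [pow_two]; exact h2)

lemma qnum_ne_zero {n : ℕ} (hn : n ≠ 0) : qnum n ≠ 0 := by
  have hv := v_ne_zero
  rw [qnum]
  apply div_ne_zero _ vv_sub_ne_zero
  rw [zpow_neg, zpow_natCast, sub_ne_zero]
  intro h
  have h2 : v ^ n * v ^ n = 1 := by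
    nth_rewrite 1 [h]
    exact inv_mul_cancel₀ (pow_ne_zero _ hv)
  rw [← pow_add] at h2
  exact vpow_ne_one (by omega) h2

lemma qfac_ne_zero (n : ℕ) : qfac n ≠ 0 := by
  induction n with
  | zero => simp [qfac]
  | succ k ih => exact mul_ne_zero ih (qnum_ne_zero k.succ_ne_zero)

def qbin (a b : ℕ) : K := qfac (a + b) / (qfac a * qfac b)

lemma qbin_zero_right (a : ℕ) : qbin a 0 = 1 := by
  simp [qbin, qfac, qfac_ne_zero]

lemma qbin_zero_left (b : ℕ) : qbin 0 b = 1 := by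
  simp [qbin, qfac, qfac_ne_zero]

lemma qnum_mul (n : ℕ) : qnum n * (v - v⁻¹) = v ^ n - (v ^ n)⁻¹ := by
  rw [qnum, zpow_neg, zpow_natCast, div_mul_cancel₀ _ vv_sub_ne_zero]

-- v^(s+1) * qnum(r+s+2) = v^(s+1)*v^(r+1)*qnum(s+1) + qnum(r+1)
lemma qnum_split (r s : ℕ) :
    v ^ (s+1) * qnum (r+s+2) = v ^ (s+1) * v ^ (r+1) * qnum (s+1) + qnum (r+1) := by
  have hv := v_ne_zero
  apply mul_right_cancel₀ vv_sub_ne_zero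
  rw [add_mul, mul_assoc, mul_assoc, qnum_mul, qnum_mul, qnum_mul]
  field_simp
  ring

lemma pascal (r s : ℕ) :
    v ^ (s+1) * qbin (r+1) (s+1) = v ^ (s+1) * v ^ (r+1) * qbin (r+1) s + qbin r (s+1) := by
  have h1 : qfac (r+1) ≠ 0 := qfac_ne_zero _
  have h2 : qfac (s+1) ≠ 0 := qfac_ne_zero _
  have h3 : qfac r ≠ 0 := qfac_ne_zero _
  have h4 : qfac s ≠ 0 := qfac_ne_zero _
  have e1 : qbin (r+1) (s+1) = qfac (r+s+1) * qnum (r+s+2) / (qfac (r+1) * qfac (s+1)) := by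
    rw [qbin, show r+1+(s+1) = (r+s+1)+1 by ring, qfac]
  have e2 : qbin (r+1) s = qfac (r+s+1) / (qfac (r+1) * qfac s) := by
    rw [qbin, show r+1+s = r+s+1 by ring]
  have e3 : qbin r (s+1) = qfac (r+s+1) / (qfac r * qfac (s+1)) := by
    rw [qbin, show r+(s+1) = r+s+1 by ring]
  have key := qnum_split r s
  rw [e1, e2, e3]
  have hq1 : qfac (r+1) = qfac r * qnum (r+1) := rfl
  have hq2 : qfac (s+1) = qfac s * qnum (s+1) := rfl
  have hn1 : qnum (r+1) ≠ 0 := qnum_ne_zero (by omega)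
  have hn2 : qnum (s+1) ≠ 0 := qnum_ne_zero (by omega)
  rw [hq1, hq2]
  field_simp
  linear_combination qfac (r+s+1) * key

lemma gauss (t : ℕ) (ht : 1 ≤ t) :
    ∑ r ∈ range (t+1), (-1:K)^r * v ^ (r*(t-1)) * qbin r (t-r) = 0 := by
  set G : ℕ → K := fun r => if r < t then (-1:K)^r * v ^ (r*t) * qbin r (t-1-r) else 0 with hG
  set P : ℕ → K := fun r => match r with | 0 => 0 | k+1 => G k with hP
  have step : ∀ r ∈ range (t+1), (-1:K)^r * v ^ (r*(t-1)) * qbin r (t-r) = P (r+1) - P r := by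
    intro r hr
    rw [mem_range] at hr
    match r with
    | 0 =>
      simp only [hP, hG]
      rw [if_pos (show 0 < t by omega)]
      simp [qbin_zero_left]
    | (k+1) =>
      rcases eq_or_lt_of_le (Nat.succ_le_of_lt (Nat.lt_of_succ_lt_succ hr)) with he | hlt
      · -- k+1 = t
        subst he
        simp only [hP, hG]
        rw [if_neg (by omega), if_pos (by omega)]
        rw [show k + 1 - (k+1) = 0 by omega, show k + 1 - 1 - k = 0 by omega,
          qbin_zero_right, qbin_zero_right, show k + 1 - 1 = k by omega]
        simp only [Nat.succ_eq_add_one]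
        ring
      · -- k+1 < t
        obtain ⟨s', rfl⟩ : ∃ s', t = k + s' + 2 := ⟨t - k - 2, by omega⟩
        simp only [hP, hG]
        rw [if_pos (by omega), if_pos (by omega)]
        rw [show k + s' + 2 - (k+1) = s' + 1 by omega,
          show k + s' + 2 - 1 - (k+1) = s' by omega,
          show k + s' + 2 - 1 - k = s' + 1 by omega,
          show k + s' + 2 - 1 = k + s' + 1 by omega]
        have key := pascal k s'
        linear_combination ((-1:K)^(k+1) * v^(k*(k+s'+2))) * key
  rw [Finset.sum_congr rfl step, Finset.sum_range_sub]
  simp only [hP, hG]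
  rw [if_neg (by omega)]
  simp

lemma cast_rt (r t : ℕ) (h : r ≤ t) : ((r * (t-1) : ℕ) : ℤ) = (r:ℤ) * ((t:ℤ) - 1) := by
  rcases t with _ | t'
  · obtain rfl : r = 0 := by omega
    simp
  · push_cast [Nat.succ_sub_one]
    ring

lemma zpow_shuffle (Q s : K) (E1 E2 E3 E4 : ℤ) (h : E1 + E2 = E3 + E4) :
    v ^ E1 * (s * v ^ E2) * Q = v ^ E3 * (s * v ^ E4 * Q) := by
  have h1 : v ^ E1 * v ^ E2 = v ^ E3 * v ^ E4 := by
    rw [← zpow_add₀ v_ne_zero, ← zpow_add₀ v_ne_zero, h]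
  linear_combination (s * Q) * h1

lemma dp_mul_dp {N : ℕ} (x : LusztigF N) (a b : ℕ) :
    dp x a * dp x b = qbin a b • dp x (a + b) := by
  rw [dp, dp, dp, smul_mul_smul_comm, ← pow_add, smul_smul]
  congr 1
  have ha := qfac_ne_zero a
  have hb := qfac_ne_zero b
  have hab := qfac_ne_zero (a+b)
  rw [qbin]
  field_simp

lemma dp_zero {N : ℕ} (x : LusztigF N) : dp x 0 = 1 := by
  simp [dp, qfac]

/-- The element `f'(i,j;m) = Σ_{r+s=m} (-1)^r v^{-r(N-m+1)} θ_i^{(s)} θ_j θ_i^{(r)}`. -/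
def fm' (N m : ℕ) : LusztigF N :=
  ∑ r ∈ range (m + 1),
    ((-1 : K) ^ r * v ^ (-(r : ℤ) * ((N : ℤ) - (m : ℤ) + 1))) •
      (dp (θi N) (m - r) * θj N * dp (θi N) r)

/-- In `f`, for `0 ≤ m ≤ N`:
`θ_i^{(m)} θ_j = Σ_{p=0}^{m} v^{(p-N)(m-p)} f'(i,j;p) θ_i^{(m-p)}`. -/
theorem stmt2 (N m : ℕ) (hm : m ≤ N) :
    dp (θi N) m * θj N =
      ∑ p ∈ range (m + 1),
        v ^ (((p : ℤ) - (N : ℤ)) * ((m : ℤ) - (p : ℤ))) • (fm' N p * dp (θi N) (m - p)) := by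
  have hv := v_ne_zero
  set x := θi N with hx
  set y := θj N with hy
  symm
  have step1 : ∀ p ∈ range (m+1),
      v ^ (((p:ℤ) - (N:ℤ)) * ((m:ℤ) - (p:ℤ))) • (fm' N p * dp x (m - p)) =
      ∑ r ∈ range (p+1),
        (v ^ (((p:ℤ) - (N:ℤ)) * ((m:ℤ) - (p:ℤ))) *
          ((-1:K)^r * v ^ (-(r:ℤ) * ((N:ℤ) - (p:ℤ) + 1))) * qbin r (m-p)) •
          (dp x (p - r) * y * dp x (r + (m - p))) := by
    intro p hp
    rw [fm', Finset.sum_mul, Finset.smul_sum]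
    refine Finset.sum_congr rfl fun r hr => ?_
    rw [smul_mul_assoc, mul_assoc, dp_mul_dp, mul_smul_comm, smul_smul, smul_smul]
  rw [Finset.sum_congr rfl step1]
  have step2 :
      (∑ p ∈ range (m+1), ∑ r ∈ range (p+1),
        (v ^ (((p:ℤ) - (N:ℤ)) * ((m:ℤ) - (p:ℤ))) *
          ((-1:K)^r * v ^ (-(r:ℤ) * ((N:ℤ) - (p:ℤ) + 1))) * qbin r (m-p)) •
          (dp x (p - r) * y * dp x (r + (m - p)))) =
      ∑ t ∈ range (m+1), ∑ r ∈ range (t+1),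
        (v ^ (((m:ℤ) - (t:ℤ) - (N:ℤ)) * (t:ℤ)) *
          ((-1:K)^r * v ^ ((r:ℤ) * ((t:ℤ) - 1)) * qbin r (t-r))) •
          (dp x (m - t) * y * dp x t) := by
    rw [Finset.sum_sigma', Finset.sum_sigma']
    refine Finset.sum_nbij' (fun a => ⟨m - a.1 + a.2, a.2⟩) (fun a => ⟨m - a.1 + a.2, a.2⟩)
      ?_ ?_ ?_ ?_ ?_
    · rintro ⟨p, r⟩ h
      simp only [Finset.mem_sigma, Finset.mem_range] at *
      omega
    · rintro ⟨t, r⟩ h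
      simp only [Finset.mem_sigma, Finset.mem_range] at *
      omega
    · rintro ⟨p, r⟩ h
      simp only [Finset.mem_sigma, Finset.mem_range] at h
      have : m - (m - p + r) + r = p := by omega
      simp [this]
    · rintro ⟨t, r⟩ h
      simp only [Finset.mem_sigma, Finset.mem_range] at h
      have : m - (m - t + r) + r = t := by omega
      simp [this]
    · rintro ⟨p, r⟩ h
      simp only [Finset.mem_sigma, Finset.mem_range] at h
      have hrp : r ≤ p := by omega
      have hpm : p ≤ m := by omega
      rw [show m - (m - p + r) = p - r by omega, show (m - p + r) - r = m - p by omega,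
        show r + (m - p) = m - p + r by omega]
      congr 1
      have hc1 : ((m - p + r : ℕ) : ℤ) = (m:ℤ) - (p:ℤ) + (r:ℤ) := by omega
      rw [hc1]
      exact zpow_shuffle _ _ _ _ _ _ (by push_cast; ring)
  rw [step2]
  have step3 : ∀ t ∈ range (m+1), t ≠ 0 →
      (∑ r ∈ range (t+1),
        (v ^ (((m:ℤ) - (t:ℤ) - (N:ℤ)) * (t:ℤ)) *
          ((-1:K)^r * v ^ ((r:ℤ) * ((t:ℤ) - 1)) * qbin r (t-r))) •
          (dp x (m - t) * y * dp x t)) = 0 := by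
    intro t ht h0
    rw [← Finset.sum_smul, ← Finset.mul_sum]
    have hc : ∀ r ∈ range (t+1),
        (-1:K)^r * v ^ ((r:ℤ) * ((t:ℤ) - 1)) * qbin r (t-r) =
        (-1:K)^r * v ^ (r * (t-1)) * qbin r (t-r) := by
      intro r hr
      rw [mem_range] at hr
      rw [← cast_rt r t (by omega), zpow_natCast]
    rw [Finset.sum_congr rfl hc, gauss t (by omega), mul_zero, zero_smul]
  rw [Finset.sum_eq_single_of_mem 0 (by simp) (fun b hb hb0 => step3 b hb hb0)]
  rw [Finset.sum_range_one]
  simp only [Nat.sub_zero, Nat.cast_zero, mul_zero, zero_mul, zpow_zero, pow_zero,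
    Nat.sub_self, dp_zero, mul_one, one_mul]
  rw [qbin_zero_left, one_smul]
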